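/- Let A = c·P (c ∈ ℂ nonzero, P the (n+1)-cycle permutation matrix) and B a diagonal matrix with pairwise distinct diagonal entries. Then any subspace W of ℂ^(n+1) invariant under both A and B is either 0 or all of ℂ^(n+1); i.e., the matrix group generated by A and B acts irreducibly on ℂ^(n+1). -/

import Mathlib

/-- The cyclic permutation matrix on `Fin (n+1)` sending `e i` to `e (i+1)`. -/
def cycP (n : ℕ) : Matrix (Fin (n + 1)) (Fin (n + 1)) ℂ :=
  Matrix.of fun i j => if i = j + 1 then 1 else 0

lemma cycP_mulVec_single (n : ℕ) (c : ℂ) (i : Fin (n + 1)) :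
    (c • cycP n).mulVec (Pi.single i 1) = c • (Pi.single (i + 1) 1 : Fin (n + 1) → ℂ) := by
  funext j
  simp [Matrix.mulVec, dotProduct, cycP, Pi.single_apply, mul_ite,
    Finset.sum_ite_eq']

/-- Diagonal-invariance with distinct entries: coordinates split off. -/
lemma single_mem_of_diag (n : ℕ) (d : Fin (n + 1) → ℂ) (hd : Function.Injective d)
    (W : Submodule ℂ (Fin (n + 1) → ℂ))
    (hWB : ∀ x ∈ W, (Matrix.diagonal d).mulVec x ∈ W) :
    ∀ (m : ℕ) (x : Fin (n + 1) → ℂ), x ∈ W →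
      (Finset.univ.filter (fun k => x k ≠ 0)).card ≤ m →
      ∀ i, x i ≠ 0 → (Pi.single i 1 : Fin (n + 1) → ℂ) ∈ W := by
  intro m
  induction m with
  | zero =>
    intro x _ hcard i hi
    exfalso
    have : i ∈ Finset.univ.filter (fun k => x k ≠ 0) := by simp [hi]
    have := Finset.card_pos.mpr ⟨i, this⟩
    omega
  | succ m ih =>
    intro x hxW hcard i hi
    by_cases hj : ∃ j, j ≠ i ∧ x j ≠ 0
    · obtain ⟨j, hji, hxj⟩ := hj
      set y : Fin (n + 1) → ℂ := (Matrix.diagonal d).mulVec x - d j • x with hy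
      have hyW : y ∈ W := W.sub_mem (hWB x hxW) (W.smul_mem _ hxW)
      have hyk : ∀ k, y k = (d k - d j) * x k := by
        intro k
        simp [hy, Matrix.mulVec_diagonal, sub_mul]
      have hyi : y i ≠ 0 := by
        rw [hyk]
        exact mul_ne_zero (sub_ne_zero.mpr fun h => hji (hd h.symm)) hi
      have hsub : Finset.univ.filter (fun k => y k ≠ 0) ⊆
            (Finset.univ.filter (fun k => x k ≠ 0)).erase j := by
          intro k hk
          simp only [Finset.mem_filter, Finset.mem_univ, true_and] at hk
          rw [hyk] at hk
          have hxk : x k ≠ 0 := fun h => hk (by simp [h])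
          have hkj : k ≠ j := by
            rintro rfl; exact hk (by simp)
          exact Finset.mem_erase.mpr ⟨hkj, by simp [hxk]⟩
      have hjmem : j ∈ Finset.univ.filter (fun k => x k ≠ 0) := by simp [hxj]
      have : (Finset.univ.filter (fun k => y k ≠ 0)).card ≤ m := by
        have h1 := Finset.card_le_card hsub
        have h2 := Finset.card_erase_of_mem hjmem
        omega
      exact ih y hyW this i hyi
    · push_neg at hj
      have : (Pi.single i 1 : Fin (n + 1) → ℂ) = (x i)⁻¹ • x := by
        funext k
        by_cases hk : k = i
        · subst hk; simp [inv_mul_cancel₀ hi]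
        · simp [Pi.single_apply, hk, hj k hk]
      rw [this]
      exact W.smul_mem _ hxW

open Fin.NatCast Fin.CommRing

theorem stmt12 (n : ℕ) (c : ℂ) (hc : c ≠ 0) (d : Fin (n + 1) → ℂ)
    (hd : Function.Injective d) (W : Submodule ℂ (Fin (n + 1) → ℂ))
    (hWA : ∀ x ∈ W, (c • cycP n).mulVec x ∈ W)
    (hWB : ∀ x ∈ W, (Matrix.diagonal d).mulVec x ∈ W) :
    W = ⊥ ∨ W = ⊤ := by
  by_cases hW : W = ⊥
  · exact Or.inl hW
  right
  obtain ⟨x, hxW, hx0⟩ := (Submodule.ne_bot_iff W).mp hW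
  obtain ⟨i, hi⟩ := Function.ne_iff.mp hx0
  simp only [Pi.zero_apply] at hi
  have hei : (Pi.single i 1 : Fin (n + 1) → ℂ) ∈ W :=
    single_mem_of_diag n d hd W hWB _ x hxW le_rfl i hi
  -- push around the cycle
  have hstep : ∀ k : Fin (n + 1), (Pi.single k 1 : Fin (n + 1) → ℂ) ∈ W →
      (Pi.single (k + 1) 1 : Fin (n + 1) → ℂ) ∈ W := by
    intro k hk
    have := hWA _ hk
    rw [cycP_mulVec_single] at this
    have h2 := W.smul_mem c⁻¹ this
    rwa [smul_smul, inv_mul_cancel₀ hc, one_smul] at h2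
  have hall : ∀ k : ℕ, (Pi.single (i + (k : Fin (n + 1))) 1 : Fin (n + 1) → ℂ) ∈ W := by
    intro k
    induction k with
    | zero => simpa using hei
    | succ k ih =>
      have := hstep _ ih
      have hcast : i + ((k + 1 : ℕ) : Fin (n + 1)) = i + (k : Fin (n + 1)) + 1 := by
        push_cast
        ring
      rwa [hcast]
  have hsingles : ∀ j : Fin (n + 1), (Pi.single j 1 : Fin (n + 1) → ℂ) ∈ W := by
    intro j
    have := hall ((j - i : Fin (n + 1)) : ℕ)
    rwa [Fin.cast_val_eq_self, add_sub_cancel] at this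
  rw [Submodule.eq_top_iff']
  intro v
  have : v = ∑ j : Fin (n + 1), v j • (Pi.single j 1 : Fin (n + 1) → ℂ) := by
    funext k
    simp [Pi.single_apply, Finset.sum_ite_eq']
  rw [this]
  exact Submodule.sum_mem W fun j _ => W.smul_mem _ (hsingles j)
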